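/- Let μ be a geodesic current on a complete finite-area hyperbolic surface Σ = Γ\H², let Λ̃ ⊂ H² be a Γ-invariant lamination consisting of μ-somewhat short geodesics, and let γ ∈ Γ be a hyperbolic element such that the axis (γ₋, γ₊) is the limit of geodesics (x₋ₙ, xₙ) where …, x₋₁, x₀, x₁, … are the consecutive ideal vertices of a complementary region (crown) of Λ̃, with each (x₋ₙ, xₙ) μ-somewhat short. Then (γ₋, γ₊) is μ-somewhat short. -/

import Mathlib

open MeasureTheory Set ENNReal Filter

instance : Fact ((0:ℝ) < 1) := ⟨one_pos⟩

/-- The circle `∂H² = S¹`, as `ℝ/ℤ`. -/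
abbrev Circ := AddCircle (1 : ℝ)

/-- The open arc `]a,b[` on a circularly ordered set. -/
def oarc {S : Type*} [CircularOrder S] (a b : S) : Set S := {x | sbtw a x b}

/-- `(a,b)` is `μ`-somewhat short. -/
def SomewhatShort (μ : Measure (Circ × Circ)) (a b : Circ) : Prop :=
  μ ((oarc a b) ×ˢ (oarc b a)) = 0

private lemma sbtw_coe_of_lt {r s t : ℝ} (h1 : r < s) (h2 : s < t) (h3 : t < r + 1) :
    sbtw (↑r : Circ) (↑s : Circ) (↑t : Circ) := by
  have hp : (0:ℝ) < 1 := one_pos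
  refine sbtw_of_btw_not_btw ?_ ?_
  · rw [QuotientAddGroup.btw_coe_iff]
    rw [(toIcoMod_eq_self hp).2 ⟨h1.le, h2.trans h3⟩,
      (toIocMod_eq_self hp).2 ⟨h1.trans h2, h3.le⟩]
    exact h2.le
  · rw [QuotientAddGroup.btw_coe_iff]
    have hs : toIcoMod hp t s = s + 1 := by
      rw [← toIcoMod_add_right hp]
      exact (toIcoMod_eq_self hp).2 ⟨by linarith, by linarith⟩
    have hr : toIocMod hp t r = r + 1 := by
      rw [← toIocMod_add_right hp]
      exact (toIocMod_eq_self hp).2 ⟨by linarith, by linarith⟩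
    rw [hs, hr]
    push_neg
    linarith

private lemma coe_eq_of_sub_one (u : ℝ) : ((u + 1 : ℝ) : Circ) = (u : Circ) := by
  have : ((u:ℝ) + 1) - u ∈ AddSubgroup.zmultiples (1:ℝ) := by
    simp [AddSubgroup.mem_zmultiples]
  exact (QuotientAddGroup.eq_iff_sub_mem).2 this

private lemma coe_toIocMod_eq (r u : ℝ) :
    ((toIocMod (one_pos) r u : ℝ) : Circ) = (u : Circ) := by
  refine (QuotientAddGroup.eq_iff_sub_mem).2 ?_
  have h : toIocMod (one_pos) r u - u = (-(toIocDiv one_pos r u)) • (1:ℝ) := by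
    have := self_sub_toIocMod one_pos r u
    rw [neg_zsmul, ← this]
    ring
  rw [h]
  exact AddSubgroup.zsmul_mem_zmultiples _ _

private lemma exists_lift_of_sbtw {a x b : Circ} (h : sbtw a x b) :
    ∃ r s t : ℝ, r < s ∧ s < t ∧ t < r + 1 ∧ (↑r : Circ) = a ∧ (↑s : Circ) = x ∧
      (↑t : Circ) = b := by
  obtain ⟨r, rfl⟩ := QuotientAddGroup.mk_surjective a
  obtain ⟨s₀, rfl⟩ := QuotientAddGroup.mk_surjective x
  obtain ⟨t₀, rfl⟩ := QuotientAddGroup.mk_surjective b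
  set s := toIocMod one_pos r s₀ with hs_def
  set t := toIocMod one_pos r t₀ with ht_def
  have hsx : ((s : ℝ) : Circ) = (s₀ : Circ) := coe_toIocMod_eq r s₀
  have htb : ((t : ℝ) : Circ) = (t₀ : Circ) := coe_toIocMod_eq r t₀
  have hs_mem := toIocMod_mem_Ioc one_pos r s₀
  have ht_mem := toIocMod_mem_Ioc one_pos r t₀
  have hs1 : r < s := hs_mem.1
  have ht1 : r < t := ht_mem.1
  have hs2 : s < r + 1 := by
    rcases lt_or_eq_of_le hs_mem.2 with h' | h'
    · exact h'
    · exfalso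
      have hs' : s = r + 1 := h'
      have : ((s : ℝ) : Circ) = ((r : ℝ) : Circ) := by
        rw [hs']; exact coe_eq_of_sub_one r
      rw [hsx] at this
      rw [← this] at h
      exact sbtw_irrefl_left h
  have ht2 : t < r + 1 := by
    rcases lt_or_eq_of_le ht_mem.2 with h' | h'
    · exact h'
    · exfalso
      have ht' : t = r + 1 := h'
      have : ((t : ℝ) : Circ) = ((r : ℝ) : Circ) := by
        rw [ht']; exact coe_eq_of_sub_one r
      rw [htb] at this
      rw [← this] at h
      exact sbtw_irrefl_left_right h
  have hst : s ≠ t := by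
    intro h'
    rw [h', htb] at hsx
    rw [← hsx] at h
    exact sbtw_irrefl_right h
  rcases lt_or_gt_of_ne hst with hlt | hgt
  · exact ⟨r, s, t, hs1, hlt, ht2, rfl, hsx, htb⟩
  · exfalso
    have h2 : sbtw ((r:ℝ) : Circ) ((t:ℝ) : Circ) ((s:ℝ) : Circ) :=
      sbtw_coe_of_lt ht1 hgt hs2
    rw [hsx, htb] at h2
    exact h.not_btw h2.cyclic_left.btw

private lemma isOpen_sbtw :
    IsOpen {p : Circ × Circ × Circ | sbtw p.1 p.2.1 p.2.2} := by
  have hmap : IsOpenMap (fun q : ℝ × ℝ × ℝ =>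
      ((↑q.1, ↑q.2.1, ↑q.2.2) : Circ × Circ × Circ)) :=
    IsOpenMap.prodMap QuotientAddGroup.isOpenMap_coe
      (IsOpenMap.prodMap QuotientAddGroup.isOpenMap_coe QuotientAddGroup.isOpenMap_coe)
  have himg : {p : Circ × Circ × Circ | sbtw p.1 p.2.1 p.2.2} =
      (fun q : ℝ × ℝ × ℝ => ((↑q.1, ↑q.2.1, ↑q.2.2) : Circ × Circ × Circ)) ''
        {q : ℝ × ℝ × ℝ | q.1 < q.2.1 ∧ q.2.1 < q.2.2 ∧ q.2.2 < q.1 + 1} := by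
    ext ⟨a, xx, b⟩
    constructor
    · intro h
      obtain ⟨r, s, t, h1, h2, h3, ha, hx, hb⟩ := exists_lift_of_sbtw h
      exact ⟨(r, s, t), ⟨h1, h2, h3⟩, by simp [ha, hx, hb]⟩
    · rintro ⟨⟨r, s, t⟩, ⟨h1, h2, h3⟩, heq⟩
      simp only [Prod.mk.injEq] at heq
      obtain ⟨ha, hx, hb⟩ := heq
      rw [← ha, ← hx, ← hb]
      exact sbtw_coe_of_lt h1 h2 h3
  rw [himg]
  apply hmap
  apply IsOpen.inter
  · exact isOpen_lt continuous_fst (continuous_fst.comp continuous_snd)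
  apply IsOpen.inter
  · exact isOpen_lt (continuous_fst.comp continuous_snd)
      (continuous_snd.comp continuous_snd)
  · exact isOpen_lt (continuous_snd.comp continuous_snd)
      (continuous_fst.add continuous_const)

/-- crown boundary is somewhat short: let `x : ℤ → Circ` enumerate the
consecutive ideal vertices of a complementary region (crown) of a lamination of
`μ`-somewhat short geodesics, so that each diagonal `(x₋ₙ, xₙ)` is `μ`-somewhat
short, and suppose `(γ₋, γ₊) = lim (x₋ₙ, xₙ)`. Then `(γ₋, γ₊)` is `μ`-somewhat
short. -/
theorem crown_boundary_somewhat_short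
    (μ : Measure (Circ × Circ)) [IsFiniteMeasureOnCompacts μ] [μ.InnerRegular]
    (x : ℤ → Circ) (gm gp : Circ) (hne : gm ≠ gp)
    (hss : ∀ n : ℕ, SomewhatShort μ (x (-(n : ℤ))) (x (n : ℤ)))
    (hlim : Tendsto (fun n : ℕ => (x (-(n : ℤ)), x (n : ℤ))) atTop
      (nhds (gm, gp))) :
    SomewhatShort μ gm gp := by
  have hopen3 := isOpen_sbtw
  have hUopen : IsOpen ((oarc gm gp) ×ˢ (oarc gp gm)) := by
    have h1 : IsOpen (oarc gm gp) := by
      have : oarc gm gp = (fun y : Circ => (gm, y, gp)) ⁻¹'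
          {p : Circ × Circ × Circ | sbtw p.1 p.2.1 p.2.2} := rfl
      rw [this]
      exact hopen3.preimage (by fun_prop)
    have h2 : IsOpen (oarc gp gm) := by
      have : oarc gp gm = (fun y : Circ => (gp, y, gm)) ⁻¹'
          {p : Circ × Circ × Circ | sbtw p.1 p.2.1 p.2.2} := rfl
      rw [this]
      exact hopen3.preimage (by fun_prop)
    exact h1.prod h2
  have hK : ∀ K, K ⊆ (oarc gm gp) ×ˢ (oarc gp gm) → IsCompact K → μ K = 0 := by
    intro K hKU hKc
    set W : Set ((Circ × Circ) × (Circ × Circ)) :=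
      {q | sbtw q.1.1 q.2.1 q.1.2 ∧ sbtw q.1.2 q.2.2 q.1.1} with hW_def
    have hW : IsOpen W := by
      apply IsOpen.inter
      · exact hopen3.preimage
          (by fun_prop : Continuous (fun q : (Circ × Circ) × (Circ × Circ) =>
            (q.1.1, q.2.1, q.1.2)))
      · exact hopen3.preimage
          (by fun_prop : Continuous (fun q : (Circ × Circ) × (Circ × Circ) =>
            (q.1.2, q.2.2, q.1.1)))
    have hsub : ({(gm, gp)} : Set (Circ × Circ)) ×ˢ K ⊆ W := by
      rintro ⟨ab, yz⟩ ⟨hab, hyz⟩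
      simp only [mem_singleton_iff] at hab
      subst hab
      obtain ⟨h1, h2⟩ := hKU hyz
      exact ⟨h1, h2⟩
    obtain ⟨u, v, hu, _hv, hmu, hKv, huv⟩ :=
      generalized_tube_lemma isCompact_singleton hKc hW hsub
    have hev : ∀ᶠ n : ℕ in atTop, (x (-(n : ℤ)), x (n : ℤ)) ∈ u :=
      hlim.eventually_mem (hu.mem_nhds (hmu rfl))
    obtain ⟨n, hn⟩ := hev.exists
    have hKsub : K ⊆ (oarc (x (-(n : ℤ))) (x (n : ℤ))) ×ˢ
        (oarc (x (n : ℤ)) (x (-(n : ℤ)))) := by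
      intro yz hyz
      have := huv (Set.mk_mem_prod hn (hKv hyz))
      exact ⟨this.1, this.2⟩
    exact le_antisymm ((measure_mono hKsub).trans_eq (hss n)) zero_le
  unfold SomewhatShort
  by_contra h0
  have hpos : (0 : ℝ≥0∞) < μ ((oarc gm gp) ×ˢ (oarc gp gm)) := pos_iff_ne_zero.2 h0
  obtain ⟨K, hKU, hKc, hKpos⟩ :=
    MeasureTheory.Measure.InnerRegular.innerRegular hUopen.measurableSet 0 hpos
  exact absurd (hK K hKU hKc) (ne_of_gt hKpos)
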